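/- arXiv:1405.0290 — 5 statements merged into one kernel-verified Lean document; each statement's English description precedes it below -/
import Mathlib

section
/- For any integer n > 1, there exists a positive integer m such that the Lucas number L_m satisfies L_m ≡ -1 (mod n). -/
def lucas : ℕ → ℕ
  | 0 => 2
  | 1 => 1
  | n + 2 => lucas (n + 1) + lucas n

theorem lucas_congr_neg_one (n : ℤ) (hn : 1 < n) :
    ∃ m : ℕ, 0 < m ∧ (lucas m : ℤ) ≡ -1 [ZMOD n] := by
  set N := n.toNat with hN
  have hN2 : 2 ≤ N := by omega
  haveI : NeZero N := ⟨by omega⟩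
  set g : ℕ → ZMod N := fun m => (lucas m : ZMod N) with hg
  set f : ℕ → ZMod N × ZMod N := fun m => (g m, g (m + 1)) with hf
  have grec : ∀ k, g (k + 2) = g (k + 1) + g k := by
    intro k
    simp [hg, lucas, Nat.cast_add]
  -- pigeonhole
  obtain ⟨i, j, hne, hij⟩ := Finite.exists_ne_map_eq_of_infinite f
  -- wlog i < j
  obtain ⟨i, j, hlt, hij⟩ : ∃ i j : ℕ, i < j ∧ f i = f j := by
    rcases lt_or_gt_of_ne hne with h | h
    · exact ⟨i, j, h, hij⟩
    · exact ⟨j, i, h, hij.symm⟩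
  set d := j - i with hd
  have hd1 : 1 ≤ d := by omega
  -- step back
  have back : ∀ a b, f (a + 1) = f (b + 1) → f a = f b := by
    intro a b h
    have h1 : g (a + 1) = g (b + 1) := congrArg Prod.fst h
    have h2 : g (a + 2) = g (b + 2) := congrArg Prod.snd h
    have : g a = g b := by
      have := grec a
      have := grec b
      have ha : g a = g (a + 2) - g (a + 1) := by rw [grec a]; ring
      have hb : g b = g (b + 2) - g (b + 1) := by rw [grec b]; ring
      rw [ha, hb, h1, h2]
    simp [hf, this, h1]
  -- step forward
  have fwd : ∀ a b, f a = f b → f (a + 1) = f (b + 1) := by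
    intro a b h
    have h1 : g a = g b := congrArg Prod.fst h
    have h2 : g (a + 1) = g (b + 1) := congrArg Prod.snd h
    have h3 : g (a + 2) = g (b + 2) := by rw [grec a, grec b, h1, h2]
    simp [hf, h2, h3]
  -- f 0 = f d, going backward from i
  have hbase : ∀ t, t ≤ i → f (i - t) = f (i - t + d) := by
    intro t
    induction t with
    | zero => intro _; simpa [hd, Nat.add_sub_cancel' (le_of_lt hlt)] using hij
    | succ t ih =>
      intro ht
      have h' := ih (by omega)
      have he : i - t = (i - (t + 1)) + 1 := by omega
      rw [he, show i - (t + 1) + 1 + d = i - (t + 1) + d + 1 from by omega] at h'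
      exact back _ _ h'
  have h0 : f 0 = f d := by simpa using hbase i le_rfl
  -- f 0 = f (k*d) ; we need f 0 = f (2*d)
  have hkd : ∀ k, f k = f (k + d) := by
    intro k
    induction k with
    | zero => simpa using h0
    | succ k ih => simpa [Nat.succ_add] using fwd _ _ ih
  have h2d : f 0 = f (2 * d) := by
    have := hkd d
    rw [h0, two_mul]
    simpa using this
  have hg0 : g (2 * d) = 2 := by
    have := congrArg Prod.fst h2d
    simpa [hf, hg, lucas] using this.symm
  have hg1 : g (2 * d + 1) = 1 := by
    have := congrArg Prod.snd h2d
    simpa [hf, hg, lucas] using this.symm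
  -- lucas (2d - 1)
  refine ⟨2 * d - 1, by omega, ?_⟩
  have hrec : g (2 * d + 1) = g (2 * d) + g (2 * d - 1) := by
    have he : 2 * d + 1 = (2 * d - 1) + 2 := by omega
    have he2 : 2 * d = (2 * d - 1) + 1 := by omega
    rw [he, grec, ← he2]
  have key : g (2 * d - 1) = -1 := by
    have : (1 : ZMod N) = 2 + g (2 * d - 1) := by rw [← hg0, ← hrec, hg1]
    linear_combination -this
  -- convert to Int.ModEq n
  have hcast : ((lucas (2 * d - 1) : ℤ) : ZMod N) = ((-1 : ℤ) : ZMod N) := by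
    push_cast
    exact key
  have := (ZMod.intCast_eq_intCast_iff _ _ _).mp hcast
  have hNn : (N : ℤ) = n := Int.toNat_of_nonneg (by omega)
  rwa [hNn] at this
end

section
/- Let p be an odd prime, write p - 1 = 2^s · t with t odd, let a be a quadratic residue modulo p with p ∤ a, and let d be a quadratic nonresidue modulo p. If m is an even integer with (a·d^m)^t ≡ 1 (mod p), then x = a^((t+1)/2) · d^(t·m/2) satisfies x^2 ≡ a (mod p). -/
theorem tonelli_shanks_final (p : ℕ) (hp : p.Prime) (hodd : Odd p)
    (s t : ℕ) (ht : Odd t) (hst : p - 1 = 2 ^ s * t)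
    (a d : ℤ) (ha : ¬ (p : ℤ) ∣ a)
    (haQR : ∃ x : ℤ, x ^ 2 ≡ a [ZMOD p])
    (hdQNR : ¬ ∃ x : ℤ, x ^ 2 ≡ d [ZMOD p])
    (m : ℕ) (hm : Even m)
    (h : (a * d ^ m) ^ t ≡ 1 [ZMOD p]) :
    (a ^ ((t + 1) / 2) * d ^ (t * m / 2)) ^ 2 ≡ a [ZMOD p] := by
  have h1 : (t + 1) / 2 * 2 = t + 1 :=
    Nat.div_mul_cancel (Even.two_dvd (Odd.add_one ht))
  have h2 : t * m / 2 * 2 = t * m :=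
    Nat.div_mul_cancel (Dvd.dvd.mul_left hm.two_dvd t)
  have key : (a ^ ((t + 1) / 2) * d ^ (t * m / 2)) ^ 2 = a * (a * d ^ m) ^ t := by
    rw [mul_pow, ← pow_mul, ← pow_mul, h1, h2, mul_pow, ← pow_mul, pow_succ]
    ring
  rw [key]
  calc a * (a * d ^ m) ^ t ≡ a * 1 [ZMOD p] := (Int.ModEq.refl a).mul h
    _ = a := mul_one a
end

section
/- Let p be an odd prime, write p - 1 = 2^s · t with t odd, let a be an integer with p ∤ a, and let d be a quadratic nonresidue modulo p. If i < s and (a·d^m)^(2^(s-i-1)·t) ≡ -1 (mod p) for some integer m, then (a·d^(m+2^i))^(2^(s-i-1)·t) ≡ 1 (mod p). -/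
theorem tonelli_shanks_step (p : ℕ) (hp : p.Prime) (hodd : Odd p)
    (s t : ℕ) (ht : Odd t) (hst : p - 1 = 2 ^ s * t)
    (a d : ℤ) (ha : ¬ (p : ℤ) ∣ a)
    (hdQNR : ¬ ∃ x : ℤ, x ^ 2 ≡ d [ZMOD p])
    (i : ℕ) (hi : i < s) (m : ℕ)
    (h : (a * d ^ m) ^ (2 ^ (s - i - 1) * t) ≡ -1 [ZMOD p]) :
    (a * d ^ (m + 2 ^ i)) ^ (2 ^ (s - i - 1) * t) ≡ 1 [ZMOD p] := by
  haveI : Fact p.Prime := ⟨hp⟩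
  have hz : ((a : ZMod p) * (d : ZMod p) ^ m) ^ (2 ^ (s - i - 1) * t) = -1 := by
    have := (ZMod.intCast_eq_intCast_iff _ _ _).mpr h
    push_cast at this
    exact this
  have hnsq : ¬ IsSquare ((d : ZMod p)) := by
    rintro ⟨x, hx⟩
    obtain ⟨x', rfl⟩ := ZMod.intCast_surjective x
    apply hdQNR
    refine ⟨x', (ZMod.intCast_eq_intCast_iff _ _ _).mp ?_⟩
    push_cast
    rw [hx]; ring
  have hd0 : (d : ZMod p) ≠ 0 := by
    intro h0
    exact hnsq ⟨0, by rw [h0]; ring⟩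
  have heuler : (d : ZMod p) ^ (p / 2) = -1 := by
    rcases ZMod.pow_div_two_eq_neg_one_or_one p hd0 with h1 | h1
    · exact absurd ((ZMod.euler_criterion p hd0).2 h1) hnsq
    · exact h1
  have hp2 : p / 2 = 2 ^ (s - 1) * t := by
    obtain ⟨k, hk⟩ := hodd
    have h1 : 2 ^ s * t = 2 * k := by omega
    have hs' : 2 ^ s = 2 * 2 ^ (s - 1) := by
      rw [← pow_succ']; congr 1; omega
    rw [hs', mul_assoc] at h1
    omega
  have hexp : 2 ^ i * (2 ^ (s - i - 1) * t) = p / 2 := by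
    rw [hp2, ← mul_assoc, ← pow_add]
    congr 2
    omega
  rw [← ZMod.intCast_eq_intCast_iff] at h ⊢
  push_cast
  calc ((a : ZMod p) * (d : ZMod p) ^ (m + 2 ^ i)) ^ (2 ^ (s - i - 1) * t)
      = ((a : ZMod p) * (d : ZMod p) ^ m) ^ (2 ^ (s - i - 1) * t) *
        ((d : ZMod p) ^ (2 ^ i)) ^ (2 ^ (s - i - 1) * t) := by
        rw [pow_add]; ring
    _ = (-1) * (d : ZMod p) ^ (2 ^ i * (2 ^ (s - i - 1) * t)) := by
        rw [hz, ← pow_mul]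
    _ = (-1) * (-1) := by rw [hexp, heuler]
    _ = 1 := by ring
end

section
/- No Fibonacci number is a primitive root modulo the prime 3001. -/
def fibP : ℕ → ZMod 3001 × ZMod 3001
  | 0 => (0, 1)
  | n+1 => ((fibP n).2, (fibP n).1 + (fibP n).2)

lemma fibP_eq (n : ℕ) :
    fibP n = ((Nat.fib n : ZMod 3001), (Nat.fib (n+1) : ZMod 3001)) := by
  induction n with
  | zero => simp [fibP]
  | succ n ih =>
      rw [fibP, ih]
      simp [Nat.fib_add_two]

lemma fibP_period (n : ℕ) : fibP (n + 100) = fibP n := by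
  induction n with
  | zero => decide
  | succ n ih =>
      rw [show fibP (n + 1 + 100) = ((fibP (n + 100)).2,
            (fibP (n + 100)).1 + (fibP (n + 100)).2) from rfl,
          show fibP (n + 1) = ((fibP n).2, (fibP n).1 + (fibP n).2) from rfl, ih]

lemma fib_mod_period (m r : ℕ) :
    ((Nat.fib (r + 100 * m) : ZMod 3001)) = (Nat.fib r : ZMod 3001) := by
  induction m with
  | zero => simp
  | succ m ih =>
      have : r + 100 * (m + 1) = (r + 100 * m) + 100 := by ring
      rw [this]
      have h := fibP_period (r + 100 * m)
      rw [fibP_eq, fibP_eq] at h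
      have := congrArg Prod.fst h
      simp at this
      rw [this, ih]

lemma key_check : ∀ r < 100, (fibP r).1 = 0 ∨ (fibP r).1 ^ 600 = 1 ∨
    (fibP r).1 ^ 1000 = 1 ∨ (fibP r).1 ^ 1500 = 1 := by
  set_option maxRecDepth 100000 in decide

theorem no_fib_primitive_root_3001 (k : ℕ) :
    orderOf ((Nat.fib k : ZMod 3001)) ≠ 3000 := by
  have hk : k = k % 100 + 100 * (k / 100) := by omega
  have hfib : (Nat.fib k : ZMod 3001) = (Nat.fib (k % 100) : ZMod 3001) := by
    conv_lhs => rw [hk]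
    rw [fib_mod_period]
  rw [hfib]
  have h := key_check (k % 100) (Nat.mod_lt _ (by norm_num))
  rw [fibP_eq] at h
  simp only at h
  set x : ZMod 3001 := (Nat.fib (k % 100) : ZMod 3001) with hx
  rcases h with h | h | h | h
  · intro habs
    have := pow_orderOf_eq_one x
    rw [habs, h, zero_pow (by norm_num)] at this
    exact absurd this (by decide)
  · intro habs
    have := orderOf_dvd_of_pow_eq_one h
    rw [habs] at this
    omega
  · intro habs
    have := orderOf_dvd_of_pow_eq_one h
    rw [habs] at this
    omega
  · intro habs
    have := orderOf_dvd_of_pow_eq_one h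
    rw [habs] at this
    omega
end

section
/- For the prime p = 2089, there is no prime q < 2089 such that 2^q + 1 is a primitive root modulo 2089. -/
set_option exponentiation.threshold 2000 in
set_option maxRecDepth 4000 in
lemma key_2089 : ∀ r < 29,
    (2 ^ r % 2089 + 1) ^ 1044 % 2089 = 1 ∨
    (2 ^ r % 2089 + 1) ^ 696 % 2089 = 1 := by decide

lemma pow_mod_2089 (q e : ℕ) :
    (2 ^ q + 1) ^ e % 2089 = (2 ^ (q % 29) % 2089 + 1) ^ e % 2089 := by
  have h29 : (2 : ℕ) ^ 29 ≡ 1 [MOD 2089] := by decide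
  have h : (2 : ℕ) ^ q ≡ 2 ^ (q % 29) [MOD 2089] := by
    conv_lhs => rw [← Nat.div_add_mod q 29, pow_add, pow_mul]
    simpa using (h29.pow (q / 29)).mul_right ((2:ℕ) ^ (q % 29))
  exact Nat.ModEq.pow e ((h.trans (Nat.mod_modEq _ _).symm).add_right 1)

lemma pow_eq_one_2089 {q e : ℕ} (h : (2 ^ (q % 29) % 2089 + 1) ^ e % 2089 = 1) :
    (((2 ^ q + 1 : ℕ)) : ZMod 2089) ^ e = 1 := by
  have hc : (2 ^ q + 1) ^ e % 2089 = 1 := (pow_mod_2089 q e).trans h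
  rw [← Nat.cast_pow, ← ZMod.natCast_mod, hc, Nat.cast_one]

theorem no_mersenne_plus_one_primroot_2089 :
    ¬ ∃ q : ℕ, q.Prime ∧ q < 2089 ∧ orderOf (((2 ^ q + 1 : ℕ)) : ZMod 2089) = 2088 := by
  rintro ⟨q, hq, hlt, hord⟩
  rcases key_2089 (q % 29) (Nat.mod_lt q (by norm_num)) with h | h <;>
  · have h1 := pow_eq_one_2089 h
    rw [← orderOf_dvd_iff_pow_eq_one, hord] at h1
    exact absurd (Nat.le_of_dvd (by norm_num) h1) (by norm_num)
end
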